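/- Let |Ψ⟩^{AB} be a bipartite pure state with reduced states Ψ^A, Ψ^B, and let τ^A, σ^B be density matrices. Then F(Ψ^{AB}, τ^A ⊗ Ψ^B) ≥ [F(Ψ^{AB}, τ^A ⊗ σ^B)]^2, where F(ρ,σ) = ‖√ρ √σ‖_1 is the fidelity. -/

import Mathlib

open Matrix BigOperators Kronecker ComplexOrder

noncomputable def funCalc {n : Type*} [Fintype n] [DecidableEq n]
    (f : ℝ → ℝ) (A : Matrix n n ℂ) : Matrix n n ℂ :=
  if h : A.IsHermitian then
    (h.eigenvectorUnitary : Matrix n n ℂ) *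
      Matrix.diagonal (fun i => (f (h.eigenvalues i) : ℂ)) *
      star (h.eigenvectorUnitary : Matrix n n ℂ)
  else 0

/-- Matrix power via functional calculus. -/
noncomputable def mpow {n : Type*} [Fintype n] [DecidableEq n]
    (A : Matrix n n ℂ) (α : ℝ) : Matrix n n ℂ :=
  funCalc (fun x => x ^ α) A

/-- A density matrix: positive semidefinite with unit trace. -/
def IsDensity {n : Type*} [Fintype n] [DecidableEq n] (ρ : Matrix n n ℂ) : Prop :=
  ρ.PosSemidef ∧ ρ.trace = 1

/-- Partial trace over the second factor. -/
noncomputable def ptraceB {a b : Type*} [Fintype a] [Fintype b]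
    (M : Matrix (a × b) (a × b) ℂ) : Matrix a a ℂ :=
  Matrix.of fun i j => ∑ k : b, M (i, k) (j, k)

/-- Partial trace over the first factor. -/
noncomputable def ptraceA {a b : Type*} [Fintype a] [Fintype b]
    (M : Matrix (a × b) (a × b) ℂ) : Matrix b b ℂ :=
  Matrix.of fun i j => ∑ k : a, M (k, i) (k, j)

/-- Fidelity F(ρ,σ) = Tr √(√σ ρ √σ). -/
noncomputable def fid {n : Type*} [Fintype n] [DecidableEq n]
    (ρ σ : Matrix n n ℂ) : ℝ :=
  ((mpow (mpow σ (1/2) * ρ * mpow σ (1/2)) (1/2)).trace).re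

/-- Outer product |ψ⟩⟨ψ|. -/
noncomputable def outer {n : Type*} (ψ : n → ℂ) : Matrix n n ℂ :=
  Matrix.of fun i j => ψ i * star (ψ j)

/-- Separability of a bipartite state. -/
def IsSepState {a b : Type*} [Fintype a] [Fintype b] [DecidableEq a] [DecidableEq b]
    (σ : Matrix (a × b) (a × b) ℂ) : Prop :=
  ∃ (k : ℕ) (q : Fin k → ℝ) (τ : Fin k → Matrix a a ℂ) (ω : Fin k → Matrix b b ℂ),
    (∀ i, 0 ≤ q i) ∧ (∑ i, q i = 1) ∧ (∀ i, IsDensity (τ i)) ∧ (∀ i, IsDensity (ω i)) ∧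
    σ = ∑ i, (q i : ℂ) • (τ i ⊗ₖ ω i)

/-- von Neumann entropy (base 2). -/
noncomputable def vnEntropy {n : Type*} [Fintype n] [DecidableEq n]
    (τ : Matrix n n ℂ) : ℝ :=
  -(τ * funCalc (Real.logb 2) τ).trace.re

/-- Rényi entropy of order β (base 2), with the von Neumann limit at β = 1. -/
noncomputable def renyiEntropy {n : Type*} [Fintype n] [DecidableEq n]
    (β : ℝ) (τ : Matrix n n ℂ) : ℝ :=
  if β = 1 then vnEntropy τ else (1 / (1 - β)) * Real.logb 2 ((mpow τ β).trace.re)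

/-- Rényi relative entropy of order α (base 2). -/
noncomputable def renyiRel {n : Type*} [Fintype n] [DecidableEq n]
    (α : ℝ) (ρ σ : Matrix n n ℂ) : ℝ :=
  (1 / (α - 1)) * Real.logb 2 ((mpow ρ α * mpow σ (1 - α)).trace.re)


set_option maxHeartbeats 1000000

section helpers

variable {n : Type*} [Fintype n] [DecidableEq n]

lemma star_mul_self_eigen {A : Matrix n n ℂ} (hA : A.IsHermitian) :
    (star (hA.eigenvectorUnitary : Matrix n n ℂ)) * (hA.eigenvectorUnitary : Matrix n n ℂ) = 1 :=
  mem_unitaryGroup_iff'.mp (hA.eigenvectorUnitary).2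

lemma trace_eq_sum_eigen {A : Matrix n n ℂ} (hA : A.IsHermitian) :
    A.trace = ∑ i, (hA.eigenvalues i : ℂ) := by
  conv_lhs => rw [hA.spectral_theorem, Unitary.conjStarAlgAut_apply]
  rw [Matrix.trace_mul_cycle, star_mul_self_eigen hA, one_mul, Matrix.trace_diagonal]
  rfl

lemma trace_sq_eq_sum_eigen {A : Matrix n n ℂ} (hA : A.IsHermitian) :
    (A * A).trace = ∑ i, ((hA.eigenvalues i : ℂ)) ^ 2 := by
  set U : Matrix n n ℂ := (hA.eigenvectorUnitary : Matrix n n ℂ) with hU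
  set D : Matrix n n ℂ := Matrix.diagonal (RCLike.ofReal ∘ hA.eigenvalues) with hD
  have h1 : star U * U = 1 := star_mul_self_eigen hA
  have key : A * A = U * (D * D) * star U := by
    conv_lhs => rw [hA.spectral_theorem, Unitary.conjStarAlgAut_apply]
    simp only [Matrix.mul_assoc]
    rw [show star U * (U * (D * star U)) = D * star U by
      rw [← Matrix.mul_assoc, h1, one_mul]]
  rw [key, Matrix.trace_mul_cycle, h1, one_mul, hD, Matrix.diagonal_mul_diagonal,
    Matrix.trace_diagonal]
  simp [sq]

lemma sum_rpow_half_eq {l : n → ℝ} (h0 : ∀ i, 0 ≤ l i)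
    (hsq : ∑ i, (l i) ^ 2 = (∑ i, l i) ^ 2) :
    ∑ i, (l i) ^ ((1:ℝ)/2) = Real.sqrt (∑ i, l i) := by
  have hexp : (∑ i, l i) ^ 2 = ∑ i, ∑ j, l i * l j := by
    rw [sq, Finset.sum_mul_sum]
  have hdiag : ∑ i, ∑ j, l i * l j
      = ∑ i, (l i) ^ 2 + ∑ i, ∑ j ∈ Finset.univ.erase i, l i * l j := by
    rw [← Finset.sum_add_distrib]
    refine Finset.sum_congr rfl fun i _ => ?_
    rw [← Finset.add_sum_erase _ _ (Finset.mem_univ i), sq]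
  have hoff : ∑ i, ∑ j ∈ Finset.univ.erase i, l i * l j = 0 := by
    have h := hsq
    rw [hexp, hdiag] at h
    linarith
  have hcross : ∀ i j, j ≠ i → l i * l j = 0 := by
    intro i j hij
    have houter := (Finset.sum_eq_zero_iff_of_nonneg (fun i _ =>
      Finset.sum_nonneg fun j _ => mul_nonneg (h0 i) (h0 j))).mp hoff i (Finset.mem_univ i)
    exact (Finset.sum_eq_zero_iff_of_nonneg (fun j _ =>
      mul_nonneg (h0 i) (h0 j))).mp houter j (Finset.mem_erase.mpr ⟨hij, Finset.mem_univ j⟩)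
  have hkey : (∑ i, Real.sqrt (l i)) ^ 2 = ∑ i, l i := by
    rw [sq, Finset.sum_mul_sum]
    refine Finset.sum_congr rfl fun i _ => ?_
    rw [← Finset.add_sum_erase _ _ (Finset.mem_univ i),
      Real.mul_self_sqrt (h0 i), Finset.sum_eq_zero, add_zero]
    intro j hj
    rw [← Real.sqrt_mul (h0 i), hcross i j (Finset.mem_erase.mp hj).1, Real.sqrt_zero]
  have hnn : 0 ≤ ∑ i, Real.sqrt (l i) := Finset.sum_nonneg fun i _ => Real.sqrt_nonneg _
  calc ∑ i, (l i) ^ ((1:ℝ)/2) = ∑ i, Real.sqrt (l i) := by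
        refine Finset.sum_congr rfl fun i _ => ?_
        rw [Real.sqrt_eq_rpow]
    _ = Real.sqrt ((∑ i, Real.sqrt (l i)) ^ 2) := (Real.sqrt_sq hnn).symm
    _ = Real.sqrt (∑ i, l i) := by rw [hkey]

/-- Square root of a PSD matrix via the spectral theorem. -/
noncomputable def Matrix.PosSemidef.sqrt {A : Matrix n n ℂ} (hA : A.PosSemidef) : Matrix n n ℂ :=
  (hA.1.eigenvectorUnitary : Matrix n n ℂ) * diagonal ((↑) ∘ (√·) ∘ hA.1.eigenvalues) *
    star (hA.1.eigenvectorUnitary : Matrix n n ℂ)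

lemma Matrix.PosSemidef.posSemidef_sqrt {A : Matrix n n ℂ} (hA : A.PosSemidef) :
    hA.sqrt.PosSemidef := by
  have hd : (diagonal ((RCLike.ofReal : ℝ → ℂ) ∘ (√·) ∘ hA.1.eigenvalues)).PosSemidef :=
    Matrix.posSemidef_diagonal_iff.mpr fun i => by
      simp only [Function.comp_apply]
      exact RCLike.ofReal_nonneg.mpr (Real.sqrt_nonneg _)
  exact hd.mul_mul_conjTranspose_same _

lemma Matrix.PosSemidef.sqrt_mul_self {A : Matrix n n ℂ} (hA : A.PosSemidef) :
    hA.sqrt * hA.sqrt = A := by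
  have h := star_mul_self_eigen hA.1
  unfold Matrix.PosSemidef.sqrt
  conv_rhs => rw [hA.1.spectral_theorem, Unitary.conjStarAlgAut_apply]
  simp only [Matrix.mul_assoc]
  rw [← Matrix.mul_assoc (star _) _ (_ * _), h, Matrix.one_mul, ← Matrix.mul_assoc (diagonal _),
    diagonal_mul_diagonal]
  congr 3
  funext i
  simp only [Function.comp_apply]
  norm_cast
  exact congrArg _ (Real.mul_self_sqrt (hA.eigenvalues_nonneg i))

lemma mpow_eq_sqrt {A : Matrix n n ℂ} (hA : A.PosSemidef) : mpow A (1/2) = hA.sqrt := by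
  unfold mpow funCalc Matrix.PosSemidef.sqrt
  rw [dif_pos hA.1]
  congr 1
  congr 1
  funext i j
  by_cases h : i = j
  · subst h; simp [Matrix.diagonal_apply_eq, Real.sqrt_eq_rpow]
  · simp [Matrix.diagonal_apply_ne _ h]

lemma mpow_trace {A : Matrix n n ℂ} (hA : A.IsHermitian) (α : ℝ) :
    (mpow A α).trace = ∑ i, ((hA.eigenvalues i ^ α : ℝ) : ℂ) := by
  unfold mpow funCalc
  rw [dif_pos hA, Matrix.trace_mul_cycle, star_mul_self_eigen hA, one_mul,
    Matrix.trace_diagonal]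

lemma outer_isHermitian (v : n → ℂ) : (outer v).IsHermitian := by
  ext i j
  simp [outer, Matrix.conjTranspose_apply, mul_comm]

lemma outer_posSemidef (v : n → ℂ) : (outer v).PosSemidef := by
  refine Matrix.PosSemidef.of_dotProduct_mulVec_nonneg (outer_isHermitian v) fun x => ?_
  have key : star x ⬝ᵥ (outer v) *ᵥ x = star (star v ⬝ᵥ x) * (star v ⬝ᵥ x) := by
    simp only [outer, dotProduct, Matrix.mulVec, Matrix.of_apply, Pi.star_apply,
      star_sum, star_mul', star_star]
    rw [Finset.sum_mul_sum]
    simp only [Finset.mul_sum]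
    refine Finset.sum_congr rfl fun i _ => Finset.sum_congr rfl fun j _ => ?_
    ring
  rw [key]
  exact star_mul_self_nonneg _

lemma conj_outer {R : Matrix n n ℂ} (hR : R.IsHermitian) (ψ : n → ℂ) :
    R * outer ψ * R = outer (R *ᵥ ψ) := by
  have hsr : ∀ k l, star (R k l) = R l k := fun k l => by
    conv_rhs => rw [← hR]
    simp [Matrix.conjTranspose_apply]
  ext i j
  simp only [outer, Matrix.mul_apply, Matrix.of_apply, Matrix.mulVec, dotProduct,
    Pi.star_apply, star_sum, star_mul', Finset.sum_mul, Finset.mul_sum]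
  refine Finset.sum_congr rfl fun k _ => Finset.sum_congr rfl fun l _ => ?_
  rw [← hsr j k]
  ring

lemma dot_smul_self (v : n → ℂ) :
    star v ⬝ᵥ v = ((∑ i, Complex.normSq (v i) : ℝ) : ℂ) := by
  push_cast
  refine Finset.sum_congr rfl fun i _ => ?_
  simp only [Pi.star_apply]
  rw [Complex.star_def, mul_comm, Complex.mul_conj]

end helpers

section helpers2

set_option linter.unusedSectionVars false

variable {n : Type*} [Fintype n] [DecidableEq n]

lemma fid_outer (ψ : n → ℂ) {ρ : Matrix n n ℂ} (hρ : ρ.PosSemidef) :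
    fid (outer ψ) ρ = Real.sqrt ((star ψ ⬝ᵥ ρ *ᵥ ψ).re) := by
  unfold fid
  have hs := mpow_eq_sqrt hρ
  have hRps : (mpow ρ (1/2)).PosSemidef := by rw [hs]; exact hρ.posSemidef_sqrt
  set R := mpow ρ (1/2) with hRdef
  have hRR : R * R = ρ := by rw [hs]; exact hρ.sqrt_mul_self
  set v := R *ᵥ ψ with hv
  have hco : R * outer ψ * R = outer v := conj_outer hRps.1 ψ
  have hMps := outer_posSemidef v
  have hM : (outer v).IsHermitian := hMps.1
  set c : ℝ := ∑ i, Complex.normSq (v i) with hc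
  have hdot : star v ⬝ᵥ v = (c : ℂ) := dot_smul_self v
  have htr : (outer v).trace = (c : ℂ) := by
    rw [← hdot]
    simp only [Matrix.trace, Matrix.diag_apply, outer, Matrix.of_apply, dotProduct,
      Pi.star_apply]
    exact Finset.sum_congr rfl fun i _ => (mul_comm _ _)
  have hsqmat : outer v * outer v = (c : ℂ) • outer v := by
    ext i j
    simp only [Matrix.mul_apply, outer, Matrix.of_apply, Matrix.smul_apply, smul_eq_mul]
    rw [show ∑ k, (v i * star (v k)) * (v k * star (v j))
        = (∑ k, star (v k) * v k) * (v i * star (v j)) by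
      rw [Finset.sum_mul]; exact Finset.sum_congr rfl fun k _ => by ring]
    rw [show (∑ k, star (v k) * v k) = (c : ℂ) by rw [← hdot]; rfl]
  set l := hM.eigenvalues with hl
  have h0 : ∀ i, 0 ≤ l i := hMps.eigenvalues_nonneg
  have e1 : ∑ i, l i = c := by
    have h := trace_eq_sum_eigen hM
    rw [htr] at h
    have h2 := congrArg Complex.re h
    simpa using h2.symm
  have e2 : ∑ i, (l i) ^ 2 = c ^ 2 := by
    have h := trace_sq_eq_sum_eigen hM
    rw [hsqmat, Matrix.trace_smul, htr, smul_eq_mul] at h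
    have h' : c * c = ∑ i, (l i) ^ 2 := by exact_mod_cast h
    rw [← h', sq]
  have hsq : ∑ i, (l i) ^ 2 = (∑ i, l i) ^ 2 := by rw [e1, e2]
  have hfinal : star ψ ⬝ᵥ ρ *ᵥ ψ = (c : ℂ) := by
    rw [← hdot, hv, Matrix.star_mulVec, hRps.1.eq, ← hRR,
      ← Matrix.mulVec_mulVec, Matrix.dotProduct_mulVec]
  rw [hco, mpow_trace hM, hfinal]
  simp only [Complex.re_sum, Complex.ofReal_re]
  rw [sum_rpow_half_eq h0 hsq, e1]

lemma trace_psd_re_nonneg {P : Matrix n n ℂ} (hP : P.PosSemidef) : 0 ≤ P.trace.re := by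
  rw [Matrix.trace]
  simp only [Complex.re_sum]
  refine Finset.sum_nonneg fun i _ => ?_
  have h := hP.re_dotProduct_nonneg (Pi.single i 1)
  simpa [Matrix.diag_apply, dotProduct, Matrix.mulVec, Pi.single_apply] using h

lemma trace_mul_psd_re_nonneg {P Q : Matrix n n ℂ} (hP : P.PosSemidef) (hQ : Q.PosSemidef) :
    0 ≤ ((P * Q).trace).re := by
  have h1 : (P * Q).trace = (hP.sqrt * Q * hP.sqrt).trace := by
    conv_lhs => rw [← hP.sqrt_mul_self]
    rw [Matrix.mul_assoc, Matrix.trace_mul_comm]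
  have h2 : (hP.sqrt * Q * hP.sqrt).PosSemidef := by
    have h3 := hQ.mul_mul_conjTranspose_same hP.sqrt
    rwa [hP.posSemidef_sqrt.1.eq] at h3
  rw [h1]
  exact trace_psd_re_nonneg h2

lemma trace_mono_psd {P Q σ' : Matrix n n ℂ} (hσ' : σ'.PosSemidef)
    (hPQ : (Q - P).PosSemidef) :
    ((P * σ').trace).re ≤ ((Q * σ').trace).re := by
  have h := trace_mul_psd_re_nonneg hPQ hσ'
  rw [Matrix.sub_mul, Matrix.trace_sub] at h
  have := Complex.sub_re ((Q * σ').trace) ((P * σ').trace)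
  rw [this] at h
  linarith

lemma one_sub_posSemidef {τ : Matrix n n ℂ} (hp : τ.PosSemidef) (ht : τ.trace = 1) :
    (1 - τ).PosSemidef := by
  set U : Matrix n n ℂ := (hp.1.eigenvectorUnitary : Matrix n n ℂ) with hU
  have h1 : U * star U = 1 := mem_unitaryGroup_iff.mp hp.1.eigenvectorUnitary.2
  have hsum : ∑ i, hp.1.eigenvalues i = 1 := by
    have h := trace_eq_sum_eigen hp.1
    rw [ht] at h
    have h2 := congrArg Complex.re h
    simpa using h2.symm
  have hle : ∀ i, hp.1.eigenvalues i ≤ 1 := fun i => by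
    rw [← hsum]
    exact Finset.single_le_sum (fun j _ => hp.eigenvalues_nonneg j) (Finset.mem_univ i)
  have hδ : (Matrix.diagonal (fun i => ((1 - hp.1.eigenvalues i : ℝ) : ℂ))).PosSemidef := by
    refine Matrix.posSemidef_diagonal_iff.mpr fun i => ?_
    rw [RCLike.nonneg_iff]
    constructor
    · simpa using sub_nonneg.mpr (hle i)
    · simp
  have key : 1 - τ = U * Matrix.diagonal (fun i => ((1 - hp.1.eigenvalues i : ℝ) : ℂ)) * star U := by
    have hdd : Matrix.diagonal (fun i => ((1 - hp.1.eigenvalues i : ℝ) : ℂ))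
        = 1 - Matrix.diagonal (RCLike.ofReal ∘ hp.1.eigenvalues) := by
      rw [← Matrix.diagonal_one, Matrix.diagonal_sub]
      congr 1
      funext i
      push_cast
      rfl
    rw [hdd, Matrix.mul_sub, Matrix.mul_one, Matrix.sub_mul, h1]
    conv_lhs => rw [hp.1.spectral_theorem, Unitary.conjStarAlgAut_apply]
  rw [key]
  exact hδ.mul_mul_conjTranspose_same U

end helpers2

section helpers3

set_option linter.unusedSectionVars false

variable {n : Type*} [Fintype n] [DecidableEq n]

lemma trace_conjTranspose_mul (X Y : Matrix n n ℂ) :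
    (Xᴴ * Y).trace = ∑ p : n × n, star (X p.1 p.2) * Y p.1 p.2 := by
  calc (Xᴴ * Y).trace = ∑ j, ∑ i, star (X i j) * Y i j := by
        simp [Matrix.trace, Matrix.mul_apply, Matrix.conjTranspose_apply]
    _ = ∑ i, ∑ j, star (X i j) * Y i j := Finset.sum_comm
    _ = ∑ p : n × n, star (X p.1 p.2) * Y p.1 p.2 :=
        (Fintype.sum_prod_type (f := fun p : n × n => star (X p.1 p.2) * Y p.1 p.2)).symm

lemma trace_conjTranspose_mul_self (X : Matrix n n ℂ) :
    (Xᴴ * X).trace = ((∑ p : n × n, Complex.normSq (X p.1 p.2) : ℝ) : ℂ) := by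
  rw [trace_conjTranspose_mul]
  push_cast
  refine Finset.sum_congr rfl fun p _ => ?_
  rw [Complex.star_def, mul_comm, Complex.mul_conj]

lemma cs_step {W σ' : Matrix n n ℂ} (hW : W.PosSemidef) (hσ' : σ'.PosSemidef)
    (hσt : σ'.trace = 1) :
    ((W * σ').trace.re) ^ 2 ≤ ((W * W * σ').trace).re := by
  set S := hσ'.sqrt with hS
  have hSh : Sᴴ = S := hσ'.posSemidef_sqrt.1
  have hSS : S * S = σ' := hσ'.sqrt_mul_self
  set Y := W * S with hY
  have htr1 : (W * σ').trace = (Sᴴ * Y).trace := by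
    rw [hSh, hY, ← hSS, ← Matrix.mul_assoc, Matrix.trace_mul_comm]
  have htr2 : (Yᴴ * Y).trace = (W * W * σ').trace := by
    have hYc : Yᴴ = S * W := by rw [hY, Matrix.conjTranspose_mul, hSh, hW.1.eq]
    rw [hYc, hY]
    rw [show S * W * (W * S) = S * (W * W) * S by simp only [Matrix.mul_assoc]]
    rw [Matrix.trace_mul_cycle, hSS, Matrix.trace_mul_comm]
  have hsum1 : (W * σ').trace = ∑ p : n × n, star (S p.1 p.2) * Y p.1 p.2 := by
    rw [htr1, trace_conjTranspose_mul]
  have habs : |((W * σ').trace).re|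
      ≤ ∑ p : n × n, ‖S p.1 p.2‖ * ‖Y p.1 p.2‖ := by
    calc |((W * σ').trace).re| ≤ ‖(W * σ').trace‖ := Complex.abs_re_le_norm _
      _ = ‖∑ p : n × n, star (S p.1 p.2) * Y p.1 p.2‖ := by rw [hsum1]
      _ ≤ ∑ p : n × n, ‖star (S p.1 p.2) * Y p.1 p.2‖ :=
          norm_sum_le _ _
      _ = ∑ p : n × n, ‖S p.1 p.2‖ * ‖Y p.1 p.2‖ := by
          refine Finset.sum_congr rfl fun p _ => ?_
          rw [norm_mul, Complex.star_def, Complex.norm_conj]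
  have hcs : (∑ p : n × n, ‖S p.1 p.2‖ * ‖Y p.1 p.2‖) ^ 2
      ≤ (∑ p : n × n, ‖S p.1 p.2‖ ^ 2) * (∑ p : n × n, ‖Y p.1 p.2‖ ^ 2) :=
    Finset.sum_mul_sq_le_sq_mul_sq _ _ _
  have h4 : ∑ p : n × n, ‖S p.1 p.2‖ ^ 2 = 1 := by
    have h := trace_conjTranspose_mul_self S
    rw [hSh, hSS, hσt] at h
    have h' : (∑ p : n × n, Complex.normSq (S p.1 p.2)) = 1 := by exact_mod_cast h.symm
    simpa [Complex.sq_norm] using h'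
  have h5 : ∑ p : n × n, ‖Y p.1 p.2‖ ^ 2 = ((W * W * σ').trace).re := by
    have h := trace_conjTranspose_mul_self Y
    rw [htr2] at h
    have h' := congrArg Complex.re h
    simp only [Complex.ofReal_re] at h'
    rw [h']
    exact Finset.sum_congr rfl fun p _ => (Complex.sq_norm _)
  calc ((W * σ').trace.re) ^ 2 = |((W * σ').trace).re| ^ 2 := (sq_abs _).symm
    _ ≤ (∑ p : n × n, ‖S p.1 p.2‖ * ‖Y p.1 p.2‖) ^ 2 :=
        pow_le_pow_left₀ (abs_nonneg _) habs 2
    _ ≤ (∑ p : n × n, ‖S p.1 p.2‖ ^ 2) * (∑ p : n × n, ‖Y p.1 p.2‖ ^ 2) :=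
        hcs
    _ = ((W * W * σ').trace).re := by rw [h4, h5, one_mul]

/-- The full chain: for `W, B` PSD with `B - W` PSD, and `σ'` a density matrix with
`1 - σ'` PSD, we have `(Re Tr(W σ'))² ≤ Re Tr(W B)`. -/
lemma core_chain {W B σ' : Matrix n n ℂ} (hW : W.PosSemidef) (hB : B.PosSemidef)
    (hσ' : σ'.PosSemidef) (hσt : σ'.trace = 1) (hσI : (1 - σ').PosSemidef)
    (hWB : (B - W).PosSemidef) :
    ((W * σ').trace.re) ^ 2 ≤ ((W * B).trace).re := by
  set RW := hW.sqrt with hRW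
  have hRWh : RWᴴ = RW := hW.posSemidef_sqrt.1
  have hRWps : RW.PosSemidef := hW.posSemidef_sqrt
  have hRR : RW * RW = W := hW.sqrt_mul_self
  have hPps : (RW * B * RW).PosSemidef := by
    have h := hB.mul_mul_conjTranspose_same RW
    rwa [hRWh] at h
  have hstep1 : ((W * σ').trace.re) ^ 2 ≤ ((W * W * σ').trace).re := cs_step hW hσ' hσt
  have hdiffps : (RW * B * RW - W * W).PosSemidef := by
    have hkey : RW * (B - W) * RW = RW * B * RW - W * W := by
      rw [Matrix.mul_sub, Matrix.sub_mul]
      congr 1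
      calc RW * W * RW = RW * (RW * RW) * RW := by rw [hRR]
        _ = (RW * RW) * (RW * RW) := by simp only [Matrix.mul_assoc]
        _ = W * W := by rw [hRR]
    rw [← hkey]
    have h := hWB.mul_mul_conjTranspose_same RW
    rwa [hRWh] at h
  have hstep2 : ((W * W * σ').trace).re ≤ ((RW * B * RW * σ').trace).re :=
    trace_mono_psd hσ' hdiffps
  have hstep3 : ((RW * B * RW * σ').trace).re ≤ ((RW * B * RW).trace).re := by
    have h := trace_mul_psd_re_nonneg hPps hσI
    rw [Matrix.mul_sub, Matrix.mul_one, Matrix.trace_sub, Complex.sub_re] at h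
    linarith
  have hstep4 : (RW * B * RW).trace = (W * B).trace := by
    rw [Matrix.trace_mul_cycle, hRR]
  calc ((W * σ').trace.re) ^ 2 ≤ ((W * W * σ').trace).re := hstep1
    _ ≤ ((RW * B * RW * σ').trace).re := hstep2
    _ ≤ ((RW * B * RW).trace).re := hstep3
    _ = ((W * B).trace).re := by rw [hstep4]

end helpers3


lemma sum_swap3 {α β γ M : Type*} [Fintype α] [Fintype β] [Fintype γ] [AddCommMonoid M]
    (f : α → β → γ → M) : ∑ x, ∑ y, ∑ z, f x y z = ∑ z, ∑ x, ∑ y, f x y z := by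
  calc ∑ x, ∑ y, ∑ z, f x y z = ∑ x, ∑ z, ∑ y, f x y z :=
      Finset.sum_congr rfl fun x _ => Finset.sum_comm
    _ = ∑ z, ∑ x, ∑ y, f x y z := Finset.sum_comm

section kron

variable {a b : Type*} [Fintype a] [Fintype b] [DecidableEq a] [DecidableEq b]

lemma kron_conjTranspose (M : Matrix a a ℂ) (N : Matrix b b ℂ) :
    (M ⊗ₖ N)ᴴ = Mᴴ ⊗ₖ Nᴴ := by
  ext ⟨i, j⟩ ⟨k, l⟩
  simp [Matrix.conjTranspose_apply, Matrix.kroneckerMap_apply, star_mul', mul_comm]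

lemma kron_posSemidef {M : Matrix a a ℂ} {N : Matrix b b ℂ}
    (hM : M.PosSemidef) (hN : N.PosSemidef) : (M ⊗ₖ N).PosSemidef := by
  have hXh : (hM.sqrt ⊗ₖ hN.sqrt)ᴴ = hM.sqrt ⊗ₖ hN.sqrt := by
    rw [kron_conjTranspose, hM.posSemidef_sqrt.1.eq, hN.posSemidef_sqrt.1.eq]
  have key : M ⊗ₖ N = (hM.sqrt ⊗ₖ hN.sqrt)ᴴ * (hM.sqrt ⊗ₖ hN.sqrt) := by
    rw [hXh, ← Matrix.mul_kronecker_mul, hM.sqrt_mul_self, hN.sqrt_mul_self]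
  rw [key]
  exact Matrix.posSemidef_conjTranspose_mul_self _

lemma expand_kron_dot (ψ : a × b → ℂ) (τ : Matrix a a ℂ) (C : Matrix b b ℂ) :
    star ψ ⬝ᵥ (τ ⊗ₖ C) *ᵥ ψ
      = ∑ m, ∑ p, (∑ k, ∑ l, star (ψ (k, m)) * τ k l * ψ (l, p)) * C m p := by
  simp only [dotProduct, Matrix.mulVec, Pi.star_apply, Matrix.kroneckerMap_apply,
    Fintype.sum_prod_type, Finset.mul_sum, Finset.sum_mul]
  rw [Finset.sum_comm]
  refine Finset.sum_congr rfl fun m _ => ?_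
  rw [sum_swap3 (f := fun k l p => star (ψ (k, m)) * (τ k l * C m p * ψ (l, p)))]
  refine Finset.sum_congr rfl fun p _ => Finset.sum_congr rfl fun k _ =>
    Finset.sum_congr rfl fun l _ => ?_
  ring

end kron

theorem fid_pure_marginal_ge_sq {a b : Type*} [Fintype a] [Fintype b]
    [DecidableEq a] [DecidableEq b]
    (ψ : a × b → ℂ) (hψ : ∑ x, Complex.normSq (ψ x) = 1)
    (τ : Matrix a a ℂ) (σ : Matrix b b ℂ) (hτ : IsDensity τ) (hσ : IsDensity σ) :
    fid (outer ψ) (τ ⊗ₖ σ) ^ 2 ≤ fid (outer ψ) (τ ⊗ₖ ptraceA (outer ψ)) := by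
  classical
  obtain ⟨hτp, hτt⟩ := hτ
  obtain ⟨hσp, hσt⟩ := hσ
  set A : Matrix a b ℂ := Matrix.of (fun k m => ψ (k, m)) with hAdef
  set W : Matrix b b ℂ := Aᴴ * τ * A with hWdef
  set Bm : Matrix b b ℂ := Aᴴ * A with hBmdef
  have hWp : W.PosSemidef := hτp.conjTranspose_mul_mul_same A
  have hBmp : Bm.PosSemidef := Matrix.posSemidef_conjTranspose_mul_self A
  have hσtp : (σᵀ).PosSemidef := hσp.transpose
  have hσtt : (σᵀ).trace = 1 := by rw [Matrix.trace_transpose, hσt]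
  have hptr : ptraceA (outer ψ) = (A.map star)ᴴ * (A.map star) := by
    ext m p
    simp [ptraceA, outer, Matrix.mul_apply, Matrix.conjTranspose_apply, Matrix.map_apply,
      hAdef]
  have hptrp : (ptraceA (outer ψ)).PosSemidef := by
    rw [hptr]; exact Matrix.posSemidef_conjTranspose_mul_self _
  have hkron1 : (τ ⊗ₖ σ).PosSemidef := kron_posSemidef hτp hσp
  have hkron2 : (τ ⊗ₖ ptraceA (outer ψ)).PosSemidef := kron_posSemidef hτp hptrp
  have hWapply : ∀ m p, W m p = ∑ k, ∑ l, star (ψ (k, m)) * τ k l * ψ (l, p) := by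
    intro m p
    rw [hWdef]
    simp only [Matrix.mul_apply, Matrix.conjTranspose_apply, hAdef, Matrix.of_apply,
      Finset.sum_mul]
    rw [Finset.sum_comm]
  have idσ : star ψ ⬝ᵥ (τ ⊗ₖ σ) *ᵥ ψ = (W * σᵀ).trace := by
    rw [expand_kron_dot, Matrix.trace]
    simp only [Matrix.diag_apply, Matrix.mul_apply, Matrix.transpose_apply]
    exact Finset.sum_congr rfl fun m _ => Finset.sum_congr rfl fun p _ => by
      rw [hWapply m p]
  have idB : star ψ ⬝ᵥ (τ ⊗ₖ ptraceA (outer ψ)) *ᵥ ψ = (W * Bm).trace := by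
    rw [expand_kron_dot, Matrix.trace]
    simp only [Matrix.diag_apply, Matrix.mul_apply]
    refine Finset.sum_congr rfl fun m _ => Finset.sum_congr rfl fun p _ => ?_
    rw [hWapply m p]
    congr 1
    rw [hBmdef]
    simp only [ptraceA, outer, Matrix.of_apply, Matrix.mul_apply,
      Matrix.conjTranspose_apply, hAdef]
    exact Finset.sum_congr rfl fun k _ => (mul_comm _ _)
  rw [fid_outer ψ hkron1, fid_outer ψ hkron2, idσ, idB]
  have hEσ : 0 ≤ ((W * σᵀ).trace).re := trace_mul_psd_re_nonneg hWp hσtp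
  rw [Real.sq_sqrt hEσ]
  have hWB : (Bm - W).PosSemidef := by
    have h1 : Bm - W = Aᴴ * (1 - τ) * A := by
      rw [Matrix.mul_sub, Matrix.mul_one, Matrix.sub_mul]
    rw [h1]
    exact (one_sub_posSemidef hτp hτt).conjTranspose_mul_mul_same A
  have hσI : (1 - σᵀ).PosSemidef := one_sub_posSemidef hσtp hσtt
  have core := core_chain hWp hBmp hσtp hσtt hσI hWB
  calc ((W * σᵀ).trace).re = Real.sqrt ((((W * σᵀ).trace).re) ^ 2) := (Real.sqrt_sq hEσ).symm
    _ ≤ Real.sqrt (((W * Bm).trace).re) := Real.sqrt_le_sqrt core
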